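/- arXiv:1906.05573 — 7 statements merged into one kernel-verified Lean document; each statement's English description precedes it below -/
import Mathlib

section
/- Let α : Fin n → Set (Σ × Fin n) be a nondeterministic automaton and suppose h : Σ* → Set (Fin n) satisfies the homomorphism equation h(v ++ w) = ⋃_{k ∈ h(w)} {i | i →_v k} for all words v, w. Then, setting F := h(ε) ⊆ Fin n, we have h(w) = {i | ∃ j ∈ F, i →_w j} for all words w; that is, every Eilenberg–Moore homomorphism from the free algebra on one generator to the dual of the saturation arises as the dual of the language map of the automaton (α, F) for some set F of final states. -/
/-- `Reach α x w y` means `x →_w y` in the nondeterministic automaton `α`. -/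
inductive Reach {σ X : Type*} (α : X → Set (σ × X)) : X → List σ → X → Prop
  | nil (x : X) : Reach α x [] x
  | cons {x y z : X} {a : σ} {w : List σ} :
      (a, y) ∈ α x → Reach α y w z → Reach α x (a :: w) z

/-- Every Eilenberg–Moore homomorphism from the free algebra on one generator to the
dual of the saturation arises as the dual of the language map of the automaton
`(α, F)` where `F := h ε`. -/
theorem stmt2 {σ : Type*} {n : ℕ} (α : Fin n → Set (σ × Fin n))
    (h : List σ → Set (Fin n))
    (hhom : ∀ v w : List σ, h (v ++ w) = ⋃ k ∈ h w, {i : Fin n | Reach α i v k}) :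
    ∀ w : List σ, h w = {i : Fin n | ∃ j ∈ h ([] : List σ), Reach α i w j} := by
  intro w
  have := hhom w []
  rw [List.append_nil] at this
  rw [this]
  ext i
  simp [Set.mem_iUnion]
end

section
/- Let M be a monoid, X and Y sets, and let b : M × Y → Set Y be an Eilenberg–Moore algebra, i.e. b(1, y) = {y} and b(m·n, y) = ⋃_{z ∈ b(n, y)} b(m, z). Then a map h : M × X → Set Y satisfies the free-algebra homomorphism equation h(m·n, x) = ⋃_{y ∈ h(n, x)} b(m, y) for all m, n ∈ M, x ∈ X, if and only if there exists a map f : Y → Set X such that for all m ∈ M, x ∈ X, y ∈ Y: y ∈ h(m, x) ⟺ ∃ z ∈ Y, y ∈ b(m, z) ∧ x ∈ f(z). -/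
/-- A map `h : M × X → Set Y` is a homomorphism from the free Eilenberg–Moore algebra
on `X` to an Eilenberg–Moore algebra `b` iff it is of the form `Sf ∘ b_-` for some
`f : Y → Set X`. -/
theorem stmt3 {M X Y : Type*} [Monoid M] (b : M × Y → Set Y)
    (hb1 : ∀ y : Y, b (1, y) = {y})
    (hb2 : ∀ (m n : M) (y : Y), b (m * n, y) = ⋃ z ∈ b (n, y), b (m, z))
    (h : M × X → Set Y) :
    (∀ (m n : M) (x : X), h (m * n, x) = ⋃ y ∈ h (n, x), b (m, y)) ↔
    (∃ f : Y → Set X, ∀ (m : M) (x : X) (y : Y),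
      y ∈ h (m, x) ↔ ∃ z : Y, y ∈ b (m, z) ∧ x ∈ f z) := by
  constructor
  · intro hh
    refine ⟨fun z => {x | z ∈ h (1, x)}, fun m x y => ?_⟩
    have : h (m, x) = ⋃ z ∈ h (1, x), b (m, z) := by
      have := hh m 1 x; rwa [mul_one] at this
    rw [this]
    simp [Set.mem_iUnion, and_comm]
  · rintro ⟨f, hf⟩ m n x
    ext y
    simp only [Set.mem_iUnion, hf, hb2, Set.mem_iUnion]
    constructor
    · rintro ⟨z, ⟨w, hw, hy⟩, hx⟩; exact ⟨w, ⟨z, hw, hx⟩, hy⟩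
    · rintro ⟨w, ⟨z, hw, hx⟩, hy⟩; exact ⟨z, ⟨w, hw, hy⟩, hx⟩
end

section
/- Regular maps form a subtheory of the Lawvere theory of the monad X ↦ Set (Σ* × X): (i) for every p, the Kleisli identity Fin p → Set (Σ* × Fin p), i ↦ {(ε, i)}, is regular; (ii) if r₁ : Fin p → Set (Σ* × Fin k) and r₂ : Fin k → Set (Σ* × Fin q) are regular, then their Kleisli composite (r₂ · r₁)(i) = {(v ++ w, j) | ∃ m, (v, m) ∈ r₁(i) ∧ (w, j) ∈ r₂(m)} is regular; (iii) if r : Fin p → Set (Σ* × Fin q) and r' : Fin p' → Set (Σ* × Fin q) are regular, then their cotuple Fin (p + p') → Set (Σ* × Fin q) (acting as r on the first p indices and as r' on the last p') is regular. -/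
/-- A map `r : Fin p → Set (Σ* × Fin q)` is regular if each of its components is
the behaviour of a state in a finite nondeterministic automaton. -/
def Regular {σ : Type*} {p q : ℕ} (r : Fin p → Set (List σ × Fin q)) : Prop :=
  ∀ i : Fin p, ∃ (n : ℕ) (α : Fin n → Set (σ × Fin n)) (s : Fin n)
    (χ : Fin n → Set (Fin q)),
      r i = {wj : List σ × Fin q | ∃ k : Fin n, Reach α s wj.1 k ∧ wj.2 ∈ χ k}

namespace Stmt6Aux

theorem Reach.trans {σ X : Type*} {α : X → Set (σ × X)} {x y z : X} {u v : List σ}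
    (h1 : Reach α x u y) (h2 : Reach α y v z) : Reach α x (u ++ v) z := by
  induction h1 with
  | nil => exact h2
  | cons hs _ ih => exact .cons hs (ih h2)

theorem reach_nil_inv {σ X : Type*} {α : X → Set (σ × X)} {x y : X}
    (h : Reach α x [] y) : y = x := by
  cases h; rfl

/-- Pull back an automaton along an equivalence: forward direction. -/
theorem reach_pull {σ X Y : Type*} (e : X ≃ Y) (α : X → Set (σ × X))
    {y y' : Y} {w : List σ}
    (h : Reach (fun b => {p : σ × Y | (p.1, e.symm p.2) ∈ α (e.symm b)}) y w y') :
    Reach α (e.symm y) w (e.symm y') := by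
  induction h with
  | nil => exact .nil _
  | cons hs _ ih => exact .cons hs ih

theorem reach_push {σ X Y : Type*} (e : X ≃ Y) (α : X → Set (σ × X))
    {x x' : X} {w : List σ} (h : Reach α x w x') :
    Reach (fun b => {p : σ × Y | (p.1, e.symm p.2) ∈ α (e.symm b)}) (e x) w (e x') := by
  induction h with
  | nil => exact .nil _
  | cons hs _ ih =>
    refine .cons ?_ ih
    simpa using hs

/-- The behaviour of a state in an automaton on any finite state space is
also the behaviour of a state in an automaton on some `Fin n`. -/
theorem behaviour_fin {σ : Type*} {q : ℕ} (X : Type) [Fintype X]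
    (α : X → Set (σ × X)) (s : X) (χ : X → Set (Fin q)) :
    ∃ (n : ℕ) (α' : Fin n → Set (σ × Fin n)) (s' : Fin n) (χ' : Fin n → Set (Fin q)),
      {wj : List σ × Fin q | ∃ k : X, Reach α s wj.1 k ∧ wj.2 ∈ χ k} =
      {wj : List σ × Fin q | ∃ k : Fin n, Reach α' s' wj.1 k ∧ wj.2 ∈ χ' k} := by
  classical
  let e : X ≃ Fin (Fintype.card X) := Fintype.equivFin X
  refine ⟨Fintype.card X, fun b => {p | (p.1, e.symm p.2) ∈ α (e.symm b)}, e s,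
    fun b => χ (e.symm b), ?_⟩
  ext ⟨w, j⟩
  constructor
  · rintro ⟨k, hr, hk⟩
    exact ⟨e k, reach_push e α hr, by simpa using hk⟩
  · rintro ⟨k, hr, hk⟩
    refine ⟨e.symm k, ?_, hk⟩
    have := reach_pull e α hr
    simpa using this

section Comp

variable {σ : Type*} {n k q : ℕ}
variable (α₁ : Fin n → Set (σ × Fin n)) (χ₁ : Fin n → Set (Fin k))
variable (n₂ : Fin k → ℕ) (α₂ : ∀ m, Fin (n₂ m) → Set (σ × Fin (n₂ m)))
variable (s₂ : ∀ m, Fin (n₂ m)) (χ₂ : ∀ m, Fin (n₂ m) → Set (Fin q))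

/-- State space of the concatenation automaton. -/
abbrev CompSt (n k : ℕ) (n₂ : Fin k → ℕ) : Type := Fin n ⊕ Σ m : Fin k, Fin (n₂ m)

/-- Transitions of the concatenation automaton. -/
def compAut : CompSt n k n₂ → Set (σ × CompSt n k n₂)
  | .inl x => {p | (∃ y, (p.1, y) ∈ α₁ x ∧ p.2 = .inl y) ∨
      ∃ m y, m ∈ χ₁ x ∧ (p.1, y) ∈ α₂ m (s₂ m) ∧ p.2 = .inr ⟨m, y⟩}
  | .inr ⟨m, x⟩ => {p | ∃ y, (p.1, y) ∈ α₂ m x ∧ p.2 = .inr ⟨m, y⟩}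

/-- Accepting map of the concatenation automaton. -/
def compAcc : CompSt n k n₂ → Set (Fin q)
  | .inl x => {j | ∃ m ∈ χ₁ x, j ∈ χ₂ m (s₂ m)}
  | .inr ⟨m, x⟩ => χ₂ m x

theorem reach_inr_inv : ∀ {z0 z : CompSt n k n₂} {w : List σ},
    Reach (compAut α₁ χ₁ n₂ α₂ s₂) z0 w z → ∀ (m : Fin k) (x : Fin (n₂ m)),
      z0 = Sum.inr ⟨m, x⟩ → ∃ y, z = Sum.inr ⟨m, y⟩ ∧ Reach (α₂ m) x w y := by
  intro z0 z w h
  induction h with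
  | nil x => exact fun m x' he => ⟨x', he, .nil _⟩
  | cons hs _ ih =>
    intro m x' he
    subst he
    obtain ⟨y', hy', hy⟩ := hs
    subst hy
    obtain ⟨z', hz, hr⟩ := ih m y' rfl
    exact ⟨z', hz, .cons hy' hr⟩

theorem reach_inr_of {m : Fin k} {x y : Fin (n₂ m)} {w : List σ}
    (h : Reach (α₂ m) x w y) :
    Reach (compAut α₁ χ₁ n₂ α₂ s₂) (.inr ⟨m, x⟩) w (.inr ⟨m, y⟩) := by
  induction h with
  | nil => exact .nil _
  | cons hs _ ih => exact .cons ⟨_, hs, rfl⟩ ih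

theorem reach_inl_of {x y : Fin n} {w : List σ} (h : Reach α₁ x w y) :
    Reach (compAut α₁ χ₁ n₂ α₂ s₂) (.inl x) w (.inl y) := by
  induction h with
  | nil => exact .nil _
  | cons hs _ ih => exact .cons (Or.inl ⟨_, hs, rfl⟩) ih

theorem reach_inl_inv : ∀ {z0 z : CompSt n k n₂} {w : List σ},
    Reach (compAut α₁ χ₁ n₂ α₂ s₂) z0 w z → ∀ x : Fin n, z0 = Sum.inl x →
      (∃ y, z = Sum.inl y ∧ Reach α₁ x w y) ∨
      (∃ (m : Fin k) (y : Fin (n₂ m)) (v w' : List σ), w = v ++ w' ∧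
        (∃ x', Reach α₁ x v x' ∧ m ∈ χ₁ x') ∧ z = Sum.inr ⟨m, y⟩ ∧
        Reach (α₂ m) (s₂ m) w' y) := by
  intro z0 z w h
  induction h with
  | nil x => exact fun x' he => Or.inl ⟨x', he, .nil _⟩
  | cons hs hrest ih =>
    intro x' he
    subst he
    rcases hs with ⟨y, hy, hu⟩ | ⟨m, y, hm, hy, hu⟩
    · subst hu
      rcases ih y rfl with ⟨y', hz, hr⟩ | ⟨m, y', v, w', hw, ⟨x'', hrx, hmx⟩, hz, hr2⟩
      · exact Or.inl ⟨y', hz, .cons hy hr⟩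
      · exact Or.inr ⟨m, y', _ :: v, w', by rw [hw]; rfl,
          ⟨x'', .cons hy hrx, hmx⟩, hz, hr2⟩
    · subst hu
      obtain ⟨y', hz, hr⟩ := reach_inr_inv α₁ χ₁ n₂ α₂ s₂ hrest m y rfl
      exact Or.inr ⟨m, y', [], _ :: _, rfl, ⟨x', .nil _, hm⟩, hz, .cons hy hr⟩

end Comp

end Stmt6Aux

open Stmt6Aux in
/-- Regular maps form a subtheory of the Lawvere theory of the monad
`X ↦ Set (Σ* × X)`: they contain the Kleisli identities and are closed under
Kleisli composition and cotupling. -/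
theorem stmt6 {σ : Type*} :
    (∀ p : ℕ, Regular (fun i : Fin p => ({([], i)} : Set (List σ × Fin p)))) ∧
    (∀ (p k q : ℕ) (r₁ : Fin p → Set (List σ × Fin k))
      (r₂ : Fin k → Set (List σ × Fin q)),
      Regular r₁ → Regular r₂ →
      Regular (fun i : Fin p => {wj : List σ × Fin q |
        ∃ (v w : List σ) (m : Fin k), wj.1 = v ++ w ∧ (v, m) ∈ r₁ i ∧ (w, wj.2) ∈ r₂ m})) ∧
    (∀ (p p' q : ℕ) (r : Fin p → Set (List σ × Fin q))
      (r' : Fin p' → Set (List σ × Fin q)),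
      Regular r → Regular r' →
      Regular (fun i : Fin (p + p') => Fin.addCases r r' i)) := by
  refine ⟨?_, ?_, ?_⟩
  · -- Kleisli identities
    intro p i
    refine ⟨1, fun _ => ∅, 0, fun _ => {i}, ?_⟩
    ext ⟨w, j⟩
    simp only [Set.mem_singleton_iff, Prod.mk.injEq, Set.mem_setOf_eq]
    constructor
    · rintro ⟨hw, hj⟩
      subst hw; subst hj
      exact ⟨0, .nil _, rfl⟩
    · rintro ⟨_, hr, hj⟩
      cases hr with
      | nil => exact ⟨rfl, hj⟩
      | cons hs _ => exact absurd hs (Set.notMem_empty _)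
  · -- Kleisli composition
    intro p k q r₁ r₂ h₁ h₂ i
    obtain ⟨n, α₁, s₁, χ₁, hr₁⟩ := h₁ i
    choose n₂ α₂ s₂ χ₂ hr₂ using h₂
    have key : {wj : List σ × Fin q |
        ∃ (v w : List σ) (m : Fin k), wj.1 = v ++ w ∧ (v, m) ∈ r₁ i ∧ (w, wj.2) ∈ r₂ m} =
        {wj : List σ × Fin q | ∃ z : CompSt n k n₂,
          Reach (compAut α₁ χ₁ n₂ α₂ s₂) (.inl s₁) wj.1 z ∧
            wj.2 ∈ compAcc χ₁ n₂ s₂ χ₂ z} := by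
      ext ⟨w, j⟩
      simp only [Set.mem_setOf_eq]
      constructor
      · rintro ⟨v, w2, m, hw, hv, hw2⟩
        rw [hr₁] at hv
        rw [hr₂] at hw2
        obtain ⟨x', hrx, hm⟩ := hv
        obtain ⟨y, hry, hj⟩ := hw2
        cases w2 with
        | nil =>
          have := reach_nil_inv hry
          subst this
          refine ⟨.inl x', ?_, ⟨m, hm, hj⟩⟩
          rw [hw, List.append_nil]
          exact reach_inl_of α₁ χ₁ n₂ α₂ s₂ hrx
        | cons a w' =>
          cases hry with
          | cons hstep hrest =>
            refine ⟨.inr ⟨m, y⟩, ?_, hj⟩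
            rw [hw]
            exact Reach.trans (reach_inl_of α₁ χ₁ n₂ α₂ s₂ hrx)
              (.cons (Or.inr ⟨m, _, hm, hstep, rfl⟩)
                (reach_inr_of α₁ χ₁ n₂ α₂ s₂ hrest))
      · rintro ⟨z, hre, hj⟩
        rcases reach_inl_inv α₁ χ₁ n₂ α₂ s₂ hre s₁ rfl with
          ⟨y, hz, hr⟩ | ⟨m, y, v, w', hw, ⟨x', hrx, hm⟩, hz, hr2⟩
        · subst hz
          obtain ⟨m, hm, hj2⟩ := hj
          refine ⟨w, [], m, (List.append_nil w).symm, ?_, ?_⟩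
          · rw [hr₁]; exact ⟨y, hr, hm⟩
          · rw [hr₂]; exact ⟨s₂ m, .nil _, hj2⟩
        · subst hz
          refine ⟨v, w', m, hw, ?_, ?_⟩
          · rw [hr₁]; exact ⟨x', hrx, hm⟩
          · rw [hr₂]; exact ⟨y, hr2, hj⟩
    obtain ⟨N, α', s', χ', hEq⟩ := behaviour_fin (CompSt n k n₂)
      (compAut α₁ χ₁ n₂ α₂ s₂) (.inl s₁) (compAcc χ₁ n₂ s₂ χ₂)
    exact ⟨N, α', s', χ', key.trans hEq⟩
  · -- Cotupling
    intro p p' q r r' hr hr' i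
    induction i using Fin.addCases with
    | left j =>
      obtain ⟨n, α, s, χ, h⟩ := hr j
      exact ⟨n, α, s, χ, by simp only [Fin.addCases_left]; exact h⟩
    | right j =>
      obtain ⟨n, α, s, χ, h⟩ := hr' j
      exact ⟨n, α, s, χ, by simp only [Fin.addCases_right]; exact h⟩
end

section
/- A tree language L ⊆ T_Σ is accepted by a state of a finite nondeterministic tree automaton (there exist n, α : Fin n → Set (Fin n × Σ × Fin n), F ⊆ Fin n and i ∈ Fin n with L = {t | t is accepted at i}) if and only if L is recognized by a finite deterministic algebra: there exist a finite type Q, a function δ : Q × Σ × Q → Q, an element q₀ ∈ Q and a subset T ⊆ Q such that L = {t | eval(t) ∈ T}, where eval is defined recursively by eval(leaf) = q₀ and eval(node(l, σ, r)) = δ(eval(l), σ, eval(r)). -/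
/-- Binary trees with `σ`-labelled inner nodes. -/
inductive BTree (σ : Type*) : Type _
  | leaf : BTree σ
  | node : BTree σ → σ → BTree σ → BTree σ

/-- Inductive acceptance for a nondeterministic tree automaton. -/
inductive Accept {σ : Type*} {n : ℕ} (α : Fin n → Set (Fin n × σ × Fin n))
    (F : Set (Fin n)) : Fin n → BTree σ → Prop
  | leaf {i : Fin n} : i ∈ F → Accept α F i BTree.leaf
  | node {i j k : Fin n} {s : σ} {l r : BTree σ} :
      (j, s, k) ∈ α i → Accept α F j l → Accept α F k r →
      Accept α F i (BTree.node l s r)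

/-- Deterministic bottom-up evaluation of a tree in an algebra `(Q, δ, q₀)`. -/
def evalT {σ Q : Type*} (δ : Q × σ × Q → Q) (q₀ : Q) : BTree σ → Q
  | BTree.leaf => q₀
  | BTree.node l s r => δ (evalT δ q₀ l, s, evalT δ q₀ r)

open Classical in
lemma det_eval {σ : Type} {n : ℕ} (α : Fin n → Set (Fin n × σ × Fin n))
    (F : Set (Fin n)) (t : BTree σ) :
    evalT (fun p => {i | ∃ j ∈ p.1, ∃ k ∈ p.2.2, (j, p.2.1, k) ∈ α i}) F t
      = {i | Accept α F i t} := by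
  induction t with
  | leaf =>
    ext i; simp [evalT]
    constructor
    · exact fun h => Accept.leaf h
    · intro h; cases h with | leaf h => exact h
  | node l s r ihl ihr =>
    ext i
    simp only [evalT, ihl, ihr, Set.mem_setOf_eq]
    constructor
    · rintro ⟨j, hj, k, hk, h⟩; exact Accept.node h hj hk
    · intro h; cases h with | node hm hl hr => exact ⟨_, hl, _, hr, hm⟩


/-- A tree language is accepted by a state of a finite nondeterministic tree automaton
iff it is recognized by a finite deterministic algebra. -/
theorem stmt10 {σ : Type} [Fintype σ] [Nonempty σ] (L : Set (BTree σ)) :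
    (∃ (n : ℕ) (α : Fin n → Set (Fin n × σ × Fin n)) (F : Set (Fin n)) (i : Fin n),
      L = {t : BTree σ | Accept α F i t}) ↔
    (∃ (Q : Type) (_ : Fintype Q) (δ : Q × σ × Q → Q) (q₀ : Q) (T : Set Q),
      L = {t : BTree σ | evalT δ q₀ t ∈ T}) := by
  constructor
  · rintro ⟨n, α, F, i, rfl⟩
    classical
    exact ⟨Set (Fin n), inferInstance,
      fun p => {i | ∃ j ∈ p.1, ∃ k ∈ p.2.2, (j, p.2.1, k) ∈ α i}, F, {A | i ∈ A},
      by ext t; simp [det_eval]⟩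
  · rintro ⟨Q, _, δ, q₀, T, rfl⟩
    classical
    set n := Fintype.card Q with hn
    obtain ⟨e⟩ : Nonempty (Fin n ≃ Q) := ⟨(Fintype.equivFin Q).symm⟩
    -- automaton on Fin (n+1); last state is the initial query state
    set α : Fin (n+1) → Set (Fin (n+1) × σ × Fin (n+1)) := fun i =>
      {p | ∃ j k : Fin n, p.1 = j.castSucc ∧ p.2.2 = k.castSucc ∧
        ((i = Fin.last n ∧ δ (e j, p.2.1, e k) ∈ T) ∨
         (∃ i' : Fin n, i = i'.castSucc ∧ δ (e j, p.2.1, e k) = e i'))} with hα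
    set F : Set (Fin (n+1)) :=
      {i | (i = Fin.last n ∧ q₀ ∈ T) ∨ ∃ i' : Fin n, i = i'.castSucc ∧ e i' = q₀} with hF
    have key : ∀ t : BTree σ,
        (∀ i' : Fin n, Accept α F i'.castSucc t ↔ e i' = evalT δ q₀ t) ∧
        (Accept α F (Fin.last n) t ↔ evalT δ q₀ t ∈ T) := by
      intro t
      induction t with
      | leaf =>
        constructor
        · intro i'
          constructor
          · intro h
            cases h with | leaf h =>
            rcases h with ⟨h1, _⟩ | ⟨i'', h1, h2⟩
            · exact absurd h1 (Fin.castSucc_lt_last i').ne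
            · rw [Fin.castSucc_inj] at h1; subst h1; exact h2
          · intro h; exact Accept.leaf (Or.inr ⟨i', rfl, h⟩)
        · constructor
          · intro h
            cases h with | leaf h =>
            rcases h with ⟨_, h2⟩ | ⟨i'', h1, _⟩
            · exact h2
            · exact absurd h1.symm (Fin.castSucc_lt_last i'').ne
          · intro h; exact Accept.leaf (Or.inl ⟨rfl, h⟩)
      | node l s r ihl ihr =>
        have step : ∀ i : Fin (n+1), Accept α F i (BTree.node l s r) ↔
            ∃ j k : Fin n, e j = evalT δ q₀ l ∧ e k = evalT δ q₀ r ∧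
              ((i = Fin.last n ∧ δ (e j, s, e k) ∈ T) ∨
               (∃ i' : Fin n, i = i'.castSucc ∧ δ (e j, s, e k) = e i')) := by
          intro i
          constructor
          · intro h
            cases h with | node hmem hl hr =>
            obtain ⟨j, k, hj, hk, hc⟩ := hmem
            simp only at hj hk
            subst hj; subst hk
            exact ⟨j, k, (ihl.1 j).mp hl, (ihr.1 k).mp hr, hc⟩
          · rintro ⟨j, k, hj, hk, hc⟩
            exact Accept.node ⟨j, k, rfl, rfl, hc⟩
              ((ihl.1 j).mpr hj) ((ihr.1 k).mpr hk)
        constructor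
        · intro i'
          rw [step]
          constructor
          · rintro ⟨j, k, hj, hk, ⟨h1, _⟩ | ⟨i'', h1, h2⟩⟩
            · exact absurd h1 (Fin.castSucc_lt_last i').ne
            · rw [Fin.castSucc_inj] at h1; subst h1
              simp [evalT, ← hj, ← hk, h2]
          · intro h
            refine ⟨e.symm (evalT δ q₀ l), e.symm (evalT δ q₀ r), by simp, by simp, Or.inr ⟨i', rfl, ?_⟩⟩
            simpa [evalT] using h.symm
        · rw [step]
          constructor
          · rintro ⟨j, k, hj, hk, ⟨_, h2⟩ | ⟨i'', h1, _⟩⟩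
            · simpa [evalT, ← hj, ← hk] using h2
            · exact absurd h1.symm (Fin.castSucc_lt_last i'').ne
          · intro h
            refine ⟨e.symm (evalT δ q₀ l), e.symm (evalT δ q₀ r), by simp, by simp, Or.inl ⟨rfl, ?_⟩⟩
            simpa [evalT] using h
    exact ⟨n+1, α, F, Fin.last n, by ext t; exact ((key t).2).symm⟩
end

section
/- Let Q be a unital quantale and α : Fin n → (Σ × Fin n → Q) a fuzzy automaton. Define α̂ : Fin n → (Σ* × Fin n → Q) by α̂(i)([σ], j) = α(i)(σ, j) and α̂(i)(w, j) = ⊥ for words w of length ≠ 1. Among all β : Fin n → (Σ* × Fin n → Q) (ordered pointwise) satisfying (a) 1 ≤ β(i)(ε, i) for all i, (b) α̂ ≤ β, and (c) β(i)(v, j) · β(j)(w, k) ≤ β(i)(v ++ w, k) for all i, j, k and words v, w, there is a least one β*, given explicitly by β*(i)(σ₁…σ_k, j) = ⨆ over tuples (j₁, …, j_{k−1}) ∈ (Fin n)^{k−1} of the product α(i)(σ₁, j₁) · α(j₁)(σ₂, j₂) · ⋯ · α(j_{k−1})(σ_k, j) (with β*(i)(ε, j) = 1 if i = j and ⊥ otherwise).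 Moreover, for every χ : Fin n → Q, the saturation-based language ⨆_{j} β*(i)(w, j) · χ(j) equals the classical fuzzy-automaton language ⨆_{(j₁,…,j_k)} α(i)(σ₁, j₁) · ⋯ · α(j_{k−1})(σ_k, j_k) · χ(j_k) for w = σ₁…σ_k (and equals χ(i) for w = ε). -/
/-- The embedding `α̂` of a fuzzy automaton into maps on words: it agrees with `α`
on single-letter words and is `⊥` elsewhere. -/
def hatW {Q σ : Type*} [Bot Q] {n : ℕ} (α : Fin n → σ × Fin n → Q)
    (i : Fin n) : List σ × Fin n → Q
  | ([a], j) => α i (a, j)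
  | _ => ⊥

/-- `SatW α β` says that `β` contains the Kleisli identity, dominates `α̂`, and is
closed under Kleisli composition of the lifted free-monoid monad. -/
def SatW {Q σ : Type*} [CompleteLattice Q] [Monoid Q] {n : ℕ}
    (α : Fin n → σ × Fin n → Q) (β : Fin n → List σ × Fin n → Q) : Prop :=
  (∀ i : Fin n, 1 ≤ β i ([], i)) ∧
  (∀ (i : Fin n) (p : List σ × Fin n), hatW α i p ≤ β i p) ∧
  (∀ (i j k : Fin n) (v w : List σ), β i (v, j) * β j (w, k) ≤ β i (v ++ w, k))

/-- The explicit saturation `β*`: the supremum over all chains of intermediate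
states of the product of the transition weights. -/
noncomputable def bstarW {Q σ : Type*} [CompleteLattice Q] [Monoid Q] {n : ℕ}
    (α : Fin n → σ × Fin n → Q) (i : Fin n) (p : List σ × Fin n) : Q :=
  ⨆ c : Fin (p.1.length + 1) → Fin n,
    ⨆ _ : c 0 = i ∧ c (Fin.last p.1.length) = p.2,
      (List.ofFn fun l : Fin p.1.length => α (c l.castSucc) (p.1.get l, c l.succ)).prod

/-- The classical language of a fuzzy automaton with final fuzzy set `χ`. -/
noncomputable def clangW {Q σ : Type*} [CompleteLattice Q] [Monoid Q] {n : ℕ}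
    (α : Fin n → σ × Fin n → Q) (χ : Fin n → Q) (i : Fin n) (w : List σ) : Q :=
  ⨆ c : Fin (w.length + 1) → Fin n,
    ⨆ _ : c 0 = i,
      (List.ofFn fun l : Fin w.length => α (c l.castSucc) (w.get l, c l.succ)).prod *
        χ (c (Fin.last w.length))

theorem myMulSup {Q : Type*} [CompleteLattice Q] [Monoid Q]
    (hd₁ : ∀ (x : Q) (S : Set Q), x * sSup S = ⨆ y ∈ S, x * y)
    {ι : Sort*} (x : Q) (f : ι → Q) : x * (⨆ i, f i) = ⨆ i, x * f i := by
  rw [iSup, hd₁, iSup_range]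

theorem mySupMul {Q : Type*} [CompleteLattice Q] [Monoid Q]
    (hd₂ : ∀ (x : Q) (S : Set Q), sSup S * x = ⨆ y ∈ S, y * x)
    {ι : Sort*} (x : Q) (f : ι → Q) : (⨆ i, f i) * x = ⨆ i, f i * x := by
  rw [iSup, hd₂, iSup_range]

theorem myBotMul {Q : Type*} [CompleteLattice Q] [Monoid Q]
    (hd₂ : ∀ (x : Q) (S : Set Q), sSup S * x = ⨆ y ∈ S, y * x)
    (x : Q) : (⊥ : Q) * x = ⊥ := by
  have := hd₂ x (∅ : Set Q)
  simpa using this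

theorem myMulLeft {Q : Type*} [CompleteLattice Q] [Monoid Q]
    (hd₁ : ∀ (x : Q) (S : Set Q), x * sSup S = ⨆ y ∈ S, x * y)
    {a c d : Q} (h2 : c ≤ d) : a * c ≤ a * d := by
  calc a * c ≤ ⨆ i : Bool, a * (if i then c else d) :=
        le_iSup (fun i : Bool => a * (if i then c else d)) true
  _ = a * ⨆ i : Bool, (if i then c else d) := (myMulSup hd₁ a _).symm
  _ = a * d := by
      congr 1
      apply le_antisymm (iSup_le ?_) (le_iSup (fun i : Bool => if i then c else d) false)
      intro i; cases i <;> simp [h2]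

theorem myMulRight {Q : Type*} [CompleteLattice Q] [Monoid Q]
    (hd₂ : ∀ (x : Q) (S : Set Q), sSup S * x = ⨆ y ∈ S, y * x)
    {a b d : Q} (h1 : a ≤ b) : a * d ≤ b * d := by
  calc a * d ≤ ⨆ i : Bool, (if i then a else b) * d :=
        le_iSup (fun i : Bool => (if i then a else b) * d) true
  _ = (⨆ i : Bool, (if i then a else b)) * d := (mySupMul hd₂ _ _).symm
  _ = b * d := by
      congr 1
      apply le_antisymm (iSup_le ?_) (le_iSup (fun i : Bool => if i then a else b) false)
      intro i; cases i <;> simp [h1]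

theorem myMulMono {Q : Type*} [CompleteLattice Q] [Monoid Q]
    (hd₁ : ∀ (x : Q) (S : Set Q), x * sSup S = ⨆ y ∈ S, x * y)
    (hd₂ : ∀ (x : Q) (S : Set Q), sSup S * x = ⨆ y ∈ S, y * x)
    {a b c d : Q} (h1 : a ≤ b) (h2 : c ≤ d) : a * c ≤ b * d :=
  (myMulLeft hd₁ h2).trans (myMulRight hd₂ h1)

theorem bstar_nil {Q σ : Type*} [CompleteLattice Q] [Monoid Q] {n : ℕ}
    (α : Fin n → σ × Fin n → Q) (i j : Fin n) :
    bstarW α i (([] : List σ), j) = if i = j then 1 else ⊥ := by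
  unfold bstarW
  simp only [List.length_nil, List.ofFn_zero, List.prod_nil]
  split
  · next h =>
    subst h
    apply le_antisymm
    · exact iSup_le fun c => iSup_le fun _ => le_rfl
    · exact le_iSup_of_le (fun _ => i) (le_iSup_of_le ⟨rfl, rfl⟩ le_rfl)
  · next h =>
    apply le_antisymm _ bot_le
    refine iSup_le fun c => iSup_le fun hc => ?_
    exact absurd (hc.1 ▸ hc.2) h

theorem prod_split {Q σ : Type*} [CompleteLattice Q] [Monoid Q] {n : ℕ}
    (α : Fin n → σ × Fin n → Q) (a : σ) (w : List σ)
    (c : Fin (w.length + 1 + 1) → Fin n) :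
    (List.ofFn fun l : Fin (w.length + 1) => α (c l.castSucc) ((a :: w).get l, c l.succ)).prod
      = α (c 0) (a, c 1) *
        (List.ofFn fun l : Fin w.length =>
          α ((c ∘ Fin.succ) l.castSucc) (w.get l, (c ∘ Fin.succ) l.succ)).prod := by
  rw [List.ofFn_succ, List.prod_cons]
  simp [Fin.succ_castSucc, Function.comp, -Fin.castSucc_succ]

theorem bstar_cons {Q σ : Type*} [CompleteLattice Q] [Monoid Q]
    (hd₁ : ∀ (x : Q) (S : Set Q), x * sSup S = ⨆ y ∈ S, x * y)
    {n : ℕ} (α : Fin n → σ × Fin n → Q) (i j : Fin n) (a : σ) (w : List σ) :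
    bstarW α i ((a :: w), j) = ⨆ k : Fin n, α i (a, k) * bstarW α k (w, j) := by
  have e1 : bstarW α i ((a :: w), j)
      = ⨆ c : Fin (w.length + 1 + 1) → Fin n,
          ⨆ _ : c 0 = i ∧ c (Fin.last (w.length + 1)) = j,
            (List.ofFn fun l : Fin (w.length + 1) =>
              α (c l.castSucc) ((a :: w).get l, c l.succ)).prod := rfl
  have e2 : ∀ k : Fin n, bstarW α k (w, j)
      = ⨆ c : Fin (w.length + 1) → Fin n,
          ⨆ _ : c 0 = k ∧ c (Fin.last w.length) = j,
            (List.ofFn fun l : Fin w.length =>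
              α (c l.castSucc) (w.get l, c l.succ)).prod := fun _ => rfl
  rw [e1]
  apply le_antisymm
  · refine iSup_le fun c => iSup_le fun hc => ?_
    rw [prod_split α a w c, hc.1]
    refine le_iSup_of_le (c 1) (myMulLeft hd₁ ?_)
    rw [e2 (c 1)]
    refine le_iSup_of_le (c ∘ Fin.succ) (le_iSup_of_le ⟨?_, ?_⟩ le_rfl)
    · show c (0 : Fin (w.length + 1)).succ = c 1
      rw [Fin.succ_zero_eq_one]
    · show c (Fin.last w.length).succ = j
      rw [Fin.succ_last]
      exact hc.2
  · refine iSup_le fun k => ?_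
    rw [e2 k, myMulSup hd₁]
    refine iSup_le fun c' => ?_
    rw [myMulSup hd₁]
    refine iSup_le fun hc' => ?_
    have hcond : (Fin.cons (α := fun _ => Fin n) i c') 0 = i ∧
        (Fin.cons (α := fun _ => Fin n) i c') (Fin.last (w.length + 1)) = j := by
      refine ⟨by simp, ?_⟩
      rw [← Fin.succ_last, Fin.cons_succ]
      exact hc'.2
    refine le_iSup_of_le ((Fin.cons (α := fun _ => Fin n) i c')) (le_iSup_of_le hcond ?_)
    · rw [prod_split α a w ((Fin.cons (α := fun _ => Fin n) i c'))]
      apply le_of_eq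
      congr 1
      rw [Fin.cons_zero, show (1 : Fin (w.length + 2)) = (0 : Fin (w.length + 1)).succ from (Fin.succ_zero_eq_one).symm, Fin.cons_succ, hc'.1]

/-- In a unital quantale, `β*` is the least map containing the Kleisli identity,
dominating `α̂`, and closed under Kleisli composition; moreover the saturation-based
language coincides with the classical fuzzy-automaton language. -/
theorem stmt12 {Q σ : Type*} [CompleteLattice Q] [Monoid Q]
    (hd₁ : ∀ (x : Q) (S : Set Q), x * sSup S = ⨆ y ∈ S, x * y)
    (hd₂ : ∀ (x : Q) (S : Set Q), sSup S * x = ⨆ y ∈ S, y * x)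
    {n : ℕ} (α : Fin n → σ × Fin n → Q) :
    (SatW α (bstarW α) ∧
      (∀ β : Fin n → List σ × Fin n → Q, SatW α β →
        ∀ (i : Fin n) (p : List σ × Fin n), bstarW α i p ≤ β i p)) ∧
    (∀ (χ : Fin n → Q) (i : Fin n) (w : List σ),
      (⨆ j : Fin n, bstarW α i (w, j) * χ j) = clangW α χ i w) := by
  have bnil := fun (i j : Fin n) => bstar_nil (σ := σ) α i j
  have hmin : ∀ β : Fin n → List σ × Fin n → Q, SatW α β →
      ∀ (i : Fin n) (p : List σ × Fin n), bstarW α i p ≤ β i p := by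
    intro β hβ i p
    obtain ⟨w, j⟩ := p
    induction w generalizing i with
    | nil =>
      rw [bnil i j]
      split
      · next h => subst h; exact hβ.1 i
      · exact bot_le
    | cons a w ih =>
      rw [bstar_cons hd₁]
      refine iSup_le fun m => ?_
      calc α i (a, m) * bstarW α m (w, j)
          ≤ β i ([a], m) * β m (w, j) :=
            myMulMono hd₁ hd₂ (hβ.2.1 i ([a], m)) (ih m)
        _ ≤ β i ([a] ++ w, j) := hβ.2.2 i m j [a] w
  refine ⟨⟨⟨?_, ?_, ?_⟩, hmin⟩, ?_⟩
  · intro i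
    rw [bnil i i]
    simp
  · intro i p
    obtain ⟨w, j⟩ := p
    match w with
    | [] => exact bot_le
    | [a] =>
      show α i (a, j) ≤ _
      rw [bstar_cons hd₁]
      refine le_iSup_of_le j ?_
      rw [bnil j j]
      simp
    | a :: b :: l => exact bot_le
  · intro i j k v w
    induction v generalizing i with
    | nil =>
      rw [bnil i j]
      split
      · next h =>
        subst h
        rw [one_mul]
        exact le_of_eq rfl
      · rw [myBotMul hd₂]
        exact bot_le
    | cons a v ih =>
      rw [bstar_cons hd₁, mySupMul hd₂]
      refine iSup_le fun m => ?_
      rw [mul_assoc]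
      have e : bstarW α i ((a :: v) ++ w, k) = bstarW α i (a :: (v ++ w), k) := rfl
      rw [e, bstar_cons hd₁]
      exact le_trans (myMulLeft hd₁ (ih m)) (le_iSup (fun k' : Fin n => α i (a, k') * bstarW α k' (v ++ w, k)) m)
  · intro χ i w
    have ebs : ∀ j : Fin n, bstarW α i (w, j)
        = ⨆ c : Fin (w.length + 1) → Fin n,
            ⨆ _ : c 0 = i ∧ c (Fin.last w.length) = j,
              (List.ofFn fun l : Fin w.length =>
                α (c l.castSucc) (w.get l, c l.succ)).prod := fun _ => rfl
    have ecl : clangW α χ i w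
        = ⨆ c : Fin (w.length + 1) → Fin n,
            ⨆ _ : c 0 = i,
              (List.ofFn fun l : Fin w.length =>
                α (c l.castSucc) (w.get l, c l.succ)).prod *
                χ (c (Fin.last w.length)) := rfl
    rw [ecl]
    apply le_antisymm
    · refine iSup_le fun j => ?_
      rw [ebs j, mySupMul hd₂]
      refine iSup_le fun c => ?_
      rw [mySupMul hd₂]
      refine iSup_le fun hc => ?_
      rw [← hc.2]
      exact le_iSup_of_le c (le_iSup_of_le hc.1 le_rfl)
    · refine iSup_le fun c => iSup_le fun hc => ?_
      refine le_iSup_of_le (c (Fin.last w.length)) ?_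
      refine myMulRight hd₂ ?_
      rw [ebs (c (Fin.last w.length))]
      exact le_iSup_of_le c (le_iSup_of_le ⟨hc, rfl⟩ le_rfl)
end

section
/- Kleene-type characterisation: let 𝓡 be the smallest family of maps Fin p → Set (Σ* × Fin q) (over all p, q ∈ ℕ) such that (a) for every χ : Fin p → Set (Fin q), the map i ↦ {(ε, j) | j ∈ χ(i)} belongs to 𝓡; (b) for every automaton α : Fin m → Set (Σ × Fin m), its saturation α* : Fin m → Set (Σ* × Fin m), α*(i) = {(w, j) | i →_w j}, belongs to 𝓡; (c) 𝓡 is closed under Kleisli composition (r₂ · r₁)(i) = {(v ++ w, j) | ∃ m, (v, m) ∈ r₁(i) ∧ (w, j) ∈ r₂(m)} and under cotupling. Then 𝓡 coincides exactly with the family of regular maps. -/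
/-- The smallest family of maps containing all maps `i ↦ {(ε, j) | j ∈ χ i}`, all
saturations of automata, and closed under Kleisli composition and cotupling. -/
inductive Gen {σ : Type*} : ∀ p q : ℕ, (Fin p → Set (List σ × Fin q)) → Prop
  | base {p q : ℕ} (χ : Fin p → Set (Fin q)) :
      Gen p q (fun i => {wj : List σ × Fin q | wj.1 = [] ∧ wj.2 ∈ χ i})
  | sat {m : ℕ} (α : Fin m → Set (σ × Fin m)) :
      Gen m m (fun i => {wj : List σ × Fin m | Reach α i wj.1 wj.2})
  | comp {p k q : ℕ} {r₁ : Fin p → Set (List σ × Fin k)}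
      {r₂ : Fin k → Set (List σ × Fin q)} :
      Gen p k r₁ → Gen k q r₂ →
      Gen p q (fun i => {wj : List σ × Fin q |
        ∃ (v w : List σ) (m : Fin k), wj.1 = v ++ w ∧ (v, m) ∈ r₁ i ∧ (w, wj.2) ∈ r₂ m})
  | cotuple {p p' q : ℕ} {r : Fin p → Set (List σ × Fin q)}
      {r' : Fin p' → Set (List σ × Fin q)} :
      Gen p q r → Gen p' q r' → Gen (p + p') q (Fin.addCases r r')

section Aux
variable {σ : Type*}

theorem reach_map {X Y : Type*} (α : X → Set (σ × X)) (β : Y → Set (σ × Y)) (f : X → Y)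
    (hf : ∀ x a x', (a, x') ∈ α x → (a, f x') ∈ β (f x)) :
    ∀ {x w x'}, Reach α x w x' → Reach β (f x) w (f x') := by
  intro x w x' h
  induction h with
  | nil x => exact .nil _
  | cons hs _ ih => exact .cons (hf _ _ _ hs) ih

theorem reach_append {X : Type*} (α : X → Set (σ × X)) {x y z : X} {v w : List σ}
    (h₁ : Reach α x v y) (h₂ : Reach α y w z) : Reach α x (v ++ w) z := by
  induction h₁ with
  | nil => exact h₂
  | cons hs _ ih => exact .cons hs (ih h₂)

theorem reach_empty {X : Type*} {x y : X} {w : List σ} :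
    Reach (fun _ : X => (∅ : Set (σ × X))) x w y ↔ w = [] ∧ y = x := by
  constructor
  · intro h
    cases h with
    | nil => exact ⟨rfl, rfl⟩
    | cons hs _ => exact absurd hs (Set.notMem_empty _)
  · rintro ⟨rfl, rfl⟩; exact .nil _

theorem reach_equiv {X Y : Type*} (e : X ≃ Y) (α : X → Set (σ × X)) {x y : X} {w : List σ} :
    Reach (fun j => {p : σ × Y | (p.1, e.symm p.2) ∈ α (e.symm j)}) (e x) w (e y)
      ↔ Reach α x w y := by
  constructor
  · intro h
    have := reach_map (σ := σ)
      (fun j => {p : σ × Y | (p.1, e.symm p.2) ∈ α (e.symm j)}) α e.symm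
      (fun j a j' hj => by simpa using hj) h
    simpa using this
  · intro h
    exact reach_map α _ e (fun x a x' hx => by simp [hx]) h

variable {n₁ k : ℕ} {n₂ : Fin k → ℕ}

/-- The combined automaton used for Kleisli composition. -/
def compAut (α₁ : Fin n₁ → Set (σ × Fin n₁)) (χ₁ : Fin n₁ → Set (Fin k))
    (α₂ : ∀ m, Fin (n₂ m) → Set (σ × Fin (n₂ m))) (s₂ : ∀ m, Fin (n₂ m)) :
    (Fin n₁ ⊕ Σ m, Fin (n₂ m)) → Set (σ × (Fin n₁ ⊕ Σ m, Fin (n₂ m))) := fun s =>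
  match s with
  | .inl x => {p | (∃ x', p.2 = .inl x' ∧ (p.1, x') ∈ α₁ x) ∨
      ∃ m y, p.2 = .inr ⟨m, y⟩ ∧ m ∈ χ₁ x ∧ (p.1, y) ∈ α₂ m (s₂ m)}
  | .inr my => {p | ∃ y', p.2 = .inr ⟨my.1, y'⟩ ∧ (p.1, y') ∈ α₂ my.1 my.2}

variable {α₁ : Fin n₁ → Set (σ × Fin n₁)} {χ₁ : Fin n₁ → Set (Fin k)}
    {α₂ : ∀ m, Fin (n₂ m) → Set (σ × Fin (n₂ m))} {s₂ : ∀ m, Fin (n₂ m)}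

theorem reach_inr_aux : ∀ {s z w}, Reach (compAut α₁ χ₁ α₂ s₂) s w z →
    ∀ m y, s = .inr ⟨m, y⟩ → ∃ y', z = Sum.inr ⟨m, y'⟩ ∧ Reach (α₂ m) y w y' := by
  intro s z w h
  induction h with
  | nil x => exact fun m y hs => ⟨y, hs, .nil _⟩
  | cons hs _ ih =>
    rintro m y rfl
    simp only [compAut, Set.mem_setOf_eq] at hs
    obtain ⟨y₁, rfl, ha⟩ := hs
    obtain ⟨y', rfl, hr⟩ := ih m y₁ rfl
    exact ⟨y', rfl, .cons ha hr⟩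

theorem reach_inl_aux : ∀ {s z w}, Reach (compAut α₁ χ₁ α₂ s₂) s w z →
    ∀ x, s = .inl x →
    (∃ x', z = .inl x' ∧ Reach α₁ x w x') ∨
    (∃ v w' x' m y, w = v ++ w' ∧ z = Sum.inr ⟨m, y⟩ ∧ Reach α₁ x v x' ∧ m ∈ χ₁ x' ∧
      Reach (α₂ m) (s₂ m) w' y) := by
  intro s z w h
  induction h with
  | nil x => exact fun x' hs => .inl ⟨x', hs, .nil _⟩
  | cons hs hrest ih =>
    rintro x rfl
    simp only [compAut, Set.mem_setOf_eq] at hs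
    rcases hs with ⟨x₁, rfl, ha⟩ | ⟨m, y₀, rfl, hm, ha⟩
    · rcases ih x₁ rfl with ⟨x', rfl, hr⟩ | ⟨v, w', x', m, y, rfl, rfl, hr, hm, hr₂⟩
      · exact .inl ⟨x', rfl, .cons ha hr⟩
      · exact .inr ⟨_ :: v, w', x', m, y, rfl, rfl, .cons ha hr, hm, hr₂⟩
    · obtain ⟨y', rfl, hr⟩ := reach_inr_aux hrest m y₀ rfl
      exact .inr ⟨[], _ :: _, x, m, y', rfl, rfl, .nil _, hm, .cons ha hr⟩

theorem reach_compAut_inl {x : Fin n₁} {v : List σ} {x' : Fin n₁} (h : Reach α₁ x v x') :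
    Reach (compAut α₁ χ₁ α₂ s₂) (.inl x) v (.inl x') :=
  reach_map α₁ _ Sum.inl (fun x a x' hx => .inl ⟨x', rfl, hx⟩) h

theorem reach_compAut_inr {m : Fin k} {y y' : Fin (n₂ m)} {w : List σ}
    (h : Reach (α₂ m) y w y') :
    Reach (compAut α₁ χ₁ α₂ s₂) (.inr ⟨m, y⟩) w (.inr ⟨m, y'⟩) :=
  reach_map (α₂ m) (compAut α₁ χ₁ α₂ s₂) (fun y => Sum.inr ⟨m, y⟩)
    (fun y a y' hy => by exact ⟨y', rfl, hy⟩) h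

theorem gen_congr {p q : ℕ} {r r' : Fin p → Set (List σ × Fin q)}
    (h : Gen p q r) (e : r = r') : Gen p q r' := e ▸ h

/-- Forward direction: generated maps are regular. -/
theorem gen_regular {p q : ℕ} {r : Fin p → Set (List σ × Fin q)}
    (h : Gen p q r) : Regular r := by
  induction h with
  | base χ =>
    intro i
    refine ⟨1, fun _ => ∅, 0, fun _ => χ i, ?_⟩
    ext ⟨w, j⟩
    simp only [Set.mem_setOf_eq, reach_empty]
    constructor
    · rintro ⟨rfl, hj⟩; exact ⟨0, ⟨rfl, rfl⟩, hj⟩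
    · rintro ⟨kk, ⟨rfl, rfl⟩, hj⟩; exact ⟨rfl, hj⟩
  | sat α =>
    intro i
    refine ⟨_, α, i, fun k => {k}, ?_⟩
    ext ⟨w, j⟩
    simp only [Set.mem_setOf_eq, Set.mem_singleton_iff]
    constructor
    · intro h; exact ⟨j, h, rfl⟩
    · rintro ⟨kk, h, rfl⟩; exact h
  | @comp p k q r₁ r₂ _ _ ih₁ ih₂ =>
    intro i
    obtain ⟨n₁, α₁, s₁, χ₁, h₁⟩ := ih₁ i
    choose n₂ α₂ s₂ χ₂ h₂ using ih₂
    set X := Fin n₁ ⊕ Σ m : Fin k, Fin (n₂ m) with hX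
    set A := compAut α₁ χ₁ α₂ s₂ with hA
    set χbig : X → Set (Fin q) :=
      Sum.elim (fun x => {j | ∃ m ∈ χ₁ x, j ∈ χ₂ m (s₂ m)}) (fun my => χ₂ my.1 my.2)
      with hχbig
    have key : {wj : List σ × Fin q |
        ∃ (v w : List σ) (m : Fin k), wj.1 = v ++ w ∧ (v, m) ∈ r₁ i ∧ (w, wj.2) ∈ r₂ m}
        = {wj : List σ × Fin q | ∃ z : X, Reach A (.inl s₁) wj.1 z ∧ wj.2 ∈ χbig z} := by
      ext ⟨w, j⟩
      simp only [Set.mem_setOf_eq]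
      constructor
      · rintro ⟨v, w', m, rfl, hv, hw⟩
        rw [h₁] at hv
        obtain ⟨x', hrx, hm⟩ := hv
        rw [h₂] at hw
        obtain ⟨y, hry, hj⟩ := hw
        cases hry with
        | nil =>
          exact ⟨.inl x', by simpa using reach_compAut_inl hrx, m, hm, hj⟩
        | @cons _ y₀ _ a w'' ha hrest =>
          refine ⟨.inr ⟨m, y⟩, ?_, hj⟩
          exact reach_append A (reach_compAut_inl hrx)
            (.cons (.inr ⟨m, y₀, rfl, hm, ha⟩) (reach_compAut_inr hrest))
      · rintro ⟨z, hr, hj⟩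
        rcases reach_inl_aux hr s₁ rfl with ⟨x', rfl, hrx⟩ |
            ⟨v, w', x', m, y, rfl, rfl, hrx, hm, hry⟩
        · obtain ⟨m, hm, hjm⟩ := hj
          refine ⟨w, [], m, by simp, ?_, ?_⟩
          · rw [h₁]; exact ⟨x', hrx, hm⟩
          · rw [h₂]; exact ⟨s₂ m, .nil _, hjm⟩
        · refine ⟨v, w', m, rfl, ?_, ?_⟩
          · rw [h₁]; exact ⟨x', hrx, hm⟩
          · rw [h₂]; exact ⟨y, hry, hj⟩
    let e : X ≃ Fin (Fintype.card X) := Fintype.equivFin X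
    refine ⟨Fintype.card X, fun j => {p | (p.1, e.symm p.2) ∈ A (e.symm j)},
      e (.inl s₁), fun k' => χbig (e.symm k'), ?_⟩
    show {wj : List σ × Fin q |
        ∃ (v w : List σ) (m : Fin k), wj.1 = v ++ w ∧ (v, m) ∈ r₁ i ∧ (w, wj.2) ∈ r₂ m} = _
    rw [key]
    ext ⟨w, j⟩
    simp only [Set.mem_setOf_eq]
    constructor
    · rintro ⟨z, hr, hj⟩
      exact ⟨e z, (reach_equiv e A).2 hr, by simpa using hj⟩
    · rintro ⟨k', hr, hj⟩
      rw [(e.apply_symm_apply k').symm] at hr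
      exact ⟨e.symm k', (reach_equiv e A).1 hr, hj⟩
  | @cotuple p p' q r r' _ _ ih₁ ih₂ =>
    intro i
    induction i using Fin.addCases with
    | left j => beta_reduce; rw [Fin.addCases_left]; exact ih₁ j
    | right j => beta_reduce; rw [Fin.addCases_right]; exact ih₂ j

/-- A regular map with one-element domain is generated. -/
theorem regular_gen_one {q : ℕ} (r : Fin 1 → Set (List σ × Fin q))
    (hr : Regular r) : Gen 1 q r := by
  obtain ⟨n, α, s, χ, h⟩ := hr 0
  have g : Gen 1 q _ :=
    Gen.comp (Gen.comp (Gen.base (σ := σ) (fun _ : Fin 1 => ({s} : Set (Fin n))))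
      (Gen.sat α)) (Gen.base χ)
  refine gen_congr g ?_
  funext i
  have hi : i = 0 := Subsingleton.elim i 0
  subst hi
  rw [h]
  ext ⟨w, j⟩
  simp only [Set.mem_setOf_eq, Set.mem_singleton_iff]
  constructor
  · rintro ⟨v, w', m', rfl, ⟨v₁, w₁, m, rfl, ⟨rfl, rfl⟩, hr₁⟩, rfl, hj⟩
    exact ⟨m', by simpa using hr₁, hj⟩
  · rintro ⟨kk, hrk, hj⟩
    exact ⟨w, [], kk, by simp, ⟨[], w, s, by simp, ⟨rfl, rfl⟩, hrk⟩, rfl, hj⟩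

/-- Backward direction: regular maps are generated. -/
theorem regular_gen : ∀ {p q : ℕ} (r : Fin p → Set (List σ × Fin q)),
    Regular r → Gen p q r := by
  intro p
  induction p with
  | zero =>
    intro q r _
    exact gen_congr (Gen.base (fun i : Fin 0 => (∅ : Set (Fin q))))
      (funext fun i => i.elim0)
  | succ p ih =>
    intro q r hr
    have g := Gen.cotuple (ih (fun i => r (Fin.castAdd 1 i)) (fun i => hr _))
      (regular_gen_one (fun i : Fin 1 => r (Fin.natAdd p i)) (fun i => hr _))
    refine gen_congr g ?_
    funext i
    induction i using Fin.addCases with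
    | left j => rw [Fin.addCases_left]
    | right j => rw [Fin.addCases_right]

end Aux

/-- Kleene-type characterisation: the smallest family containing the branching-type
maps and the saturations of automata, closed under Kleisli composition and cotupling,
is exactly the family of regular maps. -/
theorem stmt16 {σ : Type*} (p q : ℕ) (r : Fin p → Set (List σ × Fin q)) :
    Gen p q r ↔ Regular r :=
  ⟨gen_regular, regular_gen r⟩
end

section
/- Let Σ be a type and let a : T_Σ X → Set X satisfy the Eilenberg–Moore laws for the lifted binary-tree monad: a(leaf x) = {x} for all x ∈ X, and for every tree t whose leaves are themselves trees over X, a(flatten t) = ⋃ { a(t') | t' is obtained from t by replacing each leaf s of t by some element of a(s) }. Then a is determined by its restriction to one-node trees: setting â(y, σ, z) := a(node(leaf y, σ, leaf z)), one has, for every tree t ∈ T_Σ X, a(t) = E(t), where E is defined by structural recursion E(leaf x) = {x} and E(node(l, σ, r)) = ⋃_{y ∈ E(l)} ⋃_{z ∈ E(r)} â(y, σ, z). -/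
/-- Binary trees with `σ`-labelled inner nodes and leaves in `X`. -/
inductive TreeL (σ : Type*) (X : Type*) : Type _
  | leaf : X → TreeL σ X
  | node : TreeL σ X → σ → TreeL σ X → TreeL σ X

/-- Grafting (the multiplication of the free tree monad): flatten a tree whose
leaves are trees. -/
def flattenT {σ X : Type*} : TreeL σ (TreeL σ X) → TreeL σ X
  | TreeL.leaf t => t
  | TreeL.node l s r => TreeL.node (flattenT l) s (flattenT r)

/-- `Repl a t t'` holds iff `t'` is obtained from `t` by replacing each leaf `s`
of `t` by (a leaf carrying) some element of `a s`. -/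
inductive Repl {σ X : Type*} (a : TreeL σ X → Set X) :
    TreeL σ (TreeL σ X) → TreeL σ X → Prop
  | leaf {s : TreeL σ X} {x : X} : x ∈ a s → Repl a (TreeL.leaf s) (TreeL.leaf x)
  | node {l r : TreeL σ (TreeL σ X)} {l' r' : TreeL σ X} {s : σ} :
      Repl a l l' → Repl a r r' → Repl a (TreeL.node l s r) (TreeL.node l' s r')

/-- Structural-recursion evaluation determined by the one-node restriction `â`. -/
def evalE {σ X : Type*} (ah : X → σ → X → Set X) : TreeL σ X → Set X
  | TreeL.leaf x => {x}
  | TreeL.node l s r => ⋃ y ∈ evalE ah l, ⋃ z ∈ evalE ah r, ah y s z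

/-- An Eilenberg–Moore algebra for the lifted binary-tree monad is determined by its
restriction to one-node trees via structural recursion. -/
theorem stmt17 {σ X : Type*} (a : TreeL σ X → Set X)
    (h1 : ∀ x : X, a (TreeL.leaf x) = {x})
    (h2 : ∀ t : TreeL σ (TreeL σ X),
      a (flattenT t) = ⋃ t' ∈ {t' : TreeL σ X | Repl a t t'}, a t') :
    ∀ t : TreeL σ X,
      a t = evalE (fun y s z => a (TreeL.node (TreeL.leaf y) s (TreeL.leaf z))) t := by
  intro t
  induction t with
  | leaf x => simp [evalE, h1]
  | node l s r ihl ihr =>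
    have key := h2 (TreeL.node (TreeL.leaf l) s (TreeL.leaf r))
    simp only [flattenT] at key
    rw [key]
    ext w
    simp only [Set.mem_iUnion, Set.mem_setOf_eq, evalE, exists_prop]
    constructor
    · rintro ⟨t', ht', hw⟩
      rcases ht' with _ | ⟨hl, hr⟩
      cases hl with
      | @leaf _ y hy =>
      cases hr with
      | @leaf _ z hz =>
      refine ⟨y, ?_, z, ?_, hw⟩
      · rw [← ihl]; exact hy
      · rw [← ihr]; exact hz
    · intro hw
      obtain ⟨y, hy, z, hz, hw⟩ := hw
      rw [← ihl] at hy
      rw [← ihr] at hz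
      exact ⟨_, Repl.node (Repl.leaf hy) (Repl.leaf hz), hw⟩
end
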